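/- Let 0 ≤ t₁ < t₂ and let tap positions satisfy 0 = i₁ < i₂ < ⋯ < i_m < κ ≤ j₁ < j₂ < ⋯ < j_m. Define qterm(t,p) = {L+t−1−i_p, L+t−1−j_{m+1−p}}. Then for all 1 ≤ p, p′ ≤ m, qterm(t₁,p) ≠ qterm(t₂,p′); i.e., no quadratic term cancellation occurs between shifted states. -/
import Mathlib


/-- The 2-element index set {L+t−1−i_p, L+t−1−j_{m+1−p}} defining the p-th
quadratic term of the state at time t. -/
def qterm (L t : ℕ) {m : ℕ} (i j : Fin m → ℕ) (p : Fin m) : Finset ℕ :=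
  {L + t - 1 - i p, L + t - 1 - j p.rev}

/-- With tap positions 0 = i₁ < i₂ < ⋯ < i_m < κ ≤ j₁ < j₂ < ⋯ < j_m (= 2κ−2),
no quadratic term at time t₁ coincides with a quadratic term at a later time t₂:
for all p, p′, qterm(t₁,p) ≠ qterm(t₂,p′). -/
theorem no_quadratic_cancellation (L κ m t₁ t₂ : ℕ) (hm : 0 < m)
    (i j : Fin m → ℕ) (hi : StrictMono i) (hj : StrictMono j)
    (hi1 : i ⟨0, hm⟩ = 0) (hiκ : ∀ p, i p < κ)
    (hjκ : ∀ p, κ ≤ j p) (hjtop : ∀ p, j p ≤ 2 * κ - 2)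
    (hL : 2 * κ ≤ L) (ht : t₁ < t₂) (p p' : Fin m) :
    qterm L t₁ i j p ≠ qterm L t₂ i j p' := by
  intro h
  have hip := hiκ p
  have hip' := hiκ p'
  have hjp := hjκ p.rev
  have hjp' := hjκ p'.rev
  have hjt := hjtop p.rev
  have hjt' := hjtop p'.rev
  have h1 : L + t₁ - 1 - i p = L + t₂ - 1 - i p' ∨
      L + t₁ - 1 - i p = L + t₂ - 1 - j p'.rev := by
    have hm1 : L + t₁ - 1 - i p ∈ qterm L t₂ i j p' := by
      rw [← h]; simp [qterm]
    simpa [qterm] using hm1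
  have h2 : L + t₁ - 1 - j p.rev = L + t₂ - 1 - i p' ∨
      L + t₁ - 1 - j p.rev = L + t₂ - 1 - j p'.rev := by
    have hm2 : L + t₁ - 1 - j p.rev ∈ qterm L t₂ i j p' := by
      rw [← h]; simp [qterm]
    simpa [qterm] using hm2
  rcases h1 with h1 | h1 <;> rcases h2 with h2 | h2
  · omega
  · have hpi : i p < i p' := by omega
    have hpj : j p.rev < j p'.rev := by omega
    have hlt : p < p' := hi.lt_iff_lt.mp hpi
    have hlt' : p.rev < p'.rev := hj.lt_iff_lt.mp hpj
    rw [Fin.rev_lt_rev] at hlt'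
    exact absurd hlt (not_lt.mpr hlt'.le)
  · omega
  · omega
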